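/- Let v be the first vertex of the path P satisfying the cover condition, and suppose v satisfies the strict cover condition. Then every minimum weight vertex cover of the entire path P contains C* := Partition(v) ∩ P_{⪯v}. -/
import Mathlib


open Finset

/-- `C` is a vertex cover of the subpath of the path `P = (v_0, …, v_{n-1})`
induced by the vertices `v_lo, v_{lo+1}, …, v_{hi-1}` (half-open interval `[lo, hi)`);
the edges of this subpath are `{v_i, v_{i+1}}` for `lo ≤ i` and `i + 1 < hi`. -/
def IsCoverOn (lo hi : ℕ) (C : Finset ℕ) : Prop :=
  (∀ j ∈ C, lo ≤ j ∧ j < hi) ∧ ∀ i : ℕ, lo ≤ i → i + 1 < hi → (i ∈ C ∨ i + 1 ∈ C)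

/-- The total weight `ω(C) = ∑_{v ∈ C} ω(v)` of a set of vertices. -/
def wsum (ω : ℕ → ℝ) (C : Finset ℕ) : ℝ := ∑ j ∈ C, ω j

/-- `C` is a minimum weight vertex cover (MWVC) of the subpath on the vertices `[lo, hi)`. -/
def IsMWVCOn (ω : ℕ → ℝ) (lo hi : ℕ) (C : Finset ℕ) : Prop :=
  IsCoverOn lo hi C ∧ ∀ D : Finset ℕ, IsCoverOn lo hi D → wsum ω C ≤ wsum ω D

/-- `Partition(v_l) ∩ P_{⪯ v_l}`: the vertices up to (and including) `v_l` lying on the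
same side of the path's bipartition as `v_l`. -/
def sameSide (l : ℕ) : Finset ℕ := (range (l + 1)).filter fun j => j % 2 = l % 2

/-- `P_{⪯ v_l} ∖ Partition(v_l)`: the vertices up to `v_l` on the opposite side. -/
def otherSide (l : ℕ) : Finset ℕ := (range (l + 1)).filter fun j => j % 2 ≠ l % 2

/-- `v_l` satisfies the (weak) cover condition. -/
def CoverCond (ω : ℕ → ℝ) (l : ℕ) : Prop := wsum ω (sameSide l) ≤ wsum ω (otherSide l)

/-- `v_l` satisfies the strict cover condition. -/
def StrictCoverCond (ω : ℕ → ℝ) (l : ℕ) : Prop := wsum ω (sameSide l) < wsum ω (otherSide l)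

lemma otherSide_succ (m : ℕ) : otherSide (m+1) = sameSide m := by
  ext j
  simp only [otherSide, sameSide, mem_filter, mem_range]
  omega

lemma sameSide_succ (m : ℕ) : sameSide (m+1) = insert (m+1) (otherSide m) := by
  ext j
  simp only [sameSide, otherSide, mem_filter, mem_range, mem_insert]
  omega

lemma wsum_sameSide_succ (ω : ℕ → ℝ) (m : ℕ) :
    wsum ω (sameSide (m+1)) = ω (m+1) + wsum ω (otherSide m) := by
  rw [sameSide_succ, wsum, wsum, Finset.sum_insert]
  simp [otherSide, mem_filter, mem_range]

lemma keyAB (ω : ℕ → ℝ) (l : ℕ) (hfirst : ∀ j, j < l → ¬ CoverCond ω j) :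
    ∀ m, m ≤ l →
      (∀ E, IsCoverOn 0 (m+1) E → m ∈ E →
        wsum ω (sameSide m) ≤ wsum ω E ∧
          (¬ sameSide m ⊆ E → wsum ω (sameSide m) < wsum ω E)) ∧
      (∀ E, IsCoverOn 0 (m+1) E → m ∉ E →
        wsum ω (otherSide m) ≤ wsum ω E ∧
          (¬ otherSide m ⊆ E → wsum ω (otherSide m) < wsum ω E)) := by
  intro m
  induction m with
  | zero =>
    intro _
    constructor
    · intro E hcov hmem
      have hE : E = sameSide 0 := by
        apply Finset.Subset.antisymm
        · intro j hj
          have := (hcov.1 j hj).2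
          simp only [sameSide, mem_filter, mem_range]
          omega
        · intro j hj
          simp only [sameSide, mem_filter, mem_range] at hj
          have : j = 0 := by omega
          simpa [this] using hmem
      rw [hE]
      exact ⟨le_refl _, fun h => absurd (Finset.Subset.refl _) h⟩
    · intro E hcov hmem
      have hE : E = ∅ := by
        apply Finset.eq_empty_of_forall_notMem
        intro j hj
        have := (hcov.1 j hj).2
        have : j = 0 := by omega
        exact hmem (this ▸ hj)
      have hO : otherSide 0 = ∅ := by
        apply Finset.eq_empty_of_forall_notMem
        intro j hj
        simp only [otherSide, mem_filter, mem_range] at hj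
        omega
      rw [hE, hO]
      exact ⟨le_refl _, fun h => absurd (Finset.Subset.refl _) h⟩
  | succ m ih =>
    intro hml
    have ihm := ih (by omega)
    have hf : wsum ω (otherSide m) < wsum ω (sameSide m) := by
      have h := hfirst m (by omega)
      unfold CoverCond at h
      linarith [not_le.mp h]
    constructor
    · -- A (m+1)
      intro E hcov hmem
      set E' := E.erase (m+1) with hE'
      have hcov' : IsCoverOn 0 (m+1) E' := by
        constructor
        · intro j hj
          have hj' := Finset.mem_erase.mp hj
          have := (hcov.1 j hj'.2).2
          have : j ≠ m+1 := hj'.1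
          omega
        · intro i _ hi
          rcases hcov.2 i (Nat.zero_le _) (by omega) with h | h
          · exact Or.inl (Finset.mem_erase.mpr ⟨by omega, h⟩)
          · exact Or.inr (Finset.mem_erase.mpr ⟨by omega, h⟩)
      have hsum : wsum ω E = ω (m+1) + wsum ω E' := by
        rw [wsum, wsum, hE', ← Finset.add_sum_erase _ _ hmem]
      rw [wsum_sameSide_succ]
      by_cases hm : m ∈ E'
      · have hA := (ihm.1 E' hcov' hm).1
        exact ⟨by linarith, fun _ => by linarith⟩
      · have hB := ihm.2 E' hcov' hm
        constructor
        · linarith [hB.1]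
        · intro hns
          have hsub : ¬ otherSide m ⊆ E' := by
            intro hsub
            apply hns
            rw [sameSide_succ]
            intro j hj
            rcases Finset.mem_insert.mp hj with h | h
            · exact h ▸ hmem
            · exact (Finset.mem_erase.mp (hsub h)).2
          linarith [hB.2 hsub]
    · -- B (m+1)
      intro E hcov hmem
      have hcov' : IsCoverOn 0 (m+1) E := by
        constructor
        · intro j hj
          have h1 := (hcov.1 j hj).2
          have h2 : j ≠ m+1 := fun h => hmem (h ▸ hj)
          omega
        · intro i _ hi
          exact hcov.2 i (Nat.zero_le _) (by omega)
      have hmE : m ∈ E := by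
        rcases hcov.2 m (Nat.zero_le _) (by omega) with h | h
        · exact h
        · exact absurd h hmem
      have := ihm.1 E hcov' hmE
      rw [otherSide_succ]
      exact this

/-- If `v_l` is the first vertex of the path satisfying the cover condition
and it satisfies the strict cover condition, then every MWVC of the whole path contains
`Partition(v_l) ∩ P_{⪯ v_l}`. -/
theorem stmt_3 (n l : ℕ) (ω : ℕ → ℝ) (hl : l < n)
    (hcc : CoverCond ω l) (hfirst : ∀ j, j < l → ¬ CoverCond ω j)
    (hstrict : StrictCoverCond ω l) :
    ∀ C : Finset ℕ, IsMWVCOn ω 0 n C → sameSide l ⊆ C := by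

  intro C hC
  obtain ⟨hcov, hmin⟩ := hC
  by_contra hns
  set E := C.filter (fun j => j < l+1) with hEdef
  have hcovE : IsCoverOn 0 (l+1) E := by
    constructor
    · intro j hj
      have := Finset.mem_filter.mp hj
      exact ⟨Nat.zero_le _, this.2⟩
    · intro i _ hi
      rcases hcov.2 i (Nat.zero_le _) (by omega) with h | h
      · exact Or.inl (Finset.mem_filter.mpr ⟨h, by omega⟩)
      · exact Or.inr (Finset.mem_filter.mpr ⟨h, by omega⟩)
  have hkey : wsum ω (sameSide l) < wsum ω E := by
    have hAB := keyAB ω l hfirst l le_rfl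
    by_cases hl' : l ∈ E
    · apply (hAB.1 E hcovE hl').2
      intro hsub
      exact hns (fun j hj => (Finset.mem_filter.mp (hsub hj)).1)
    · have h1 := (hAB.2 E hcovE hl').1
      have h2 : wsum ω (sameSide l) < wsum ω (otherSide l) := hstrict
      linarith
  set T := C.filter (fun j => ¬ j < l+1) with hTdef
  set D := sameSide l ∪ T with hDdef
  have hcovD : IsCoverOn 0 n D := by
    constructor
    · intro j hj
      rcases Finset.mem_union.mp hj with h | h
      · simp only [sameSide, mem_filter, mem_range] at h
        exact ⟨Nat.zero_le _, by omega⟩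
      · exact hcov.1 j (Finset.mem_filter.mp h).1
    · intro i _ hi
      by_cases h1 : i + 1 ≤ l
      · by_cases h2 : i % 2 = l % 2
        · exact Or.inl (Finset.mem_union.mpr (Or.inl (by
            simp only [sameSide, mem_filter, mem_range]; omega)))
        · exact Or.inr (Finset.mem_union.mpr (Or.inl (by
            simp only [sameSide, mem_filter, mem_range]; omega)))
      · by_cases h2 : i = l
        · exact Or.inl (Finset.mem_union.mpr (Or.inl (by
            simp only [sameSide, mem_filter, mem_range]; omega)))
        · rcases hcov.2 i (Nat.zero_le _) hi with h | h
          · exact Or.inl (Finset.mem_union.mpr (Or.inr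
              (Finset.mem_filter.mpr ⟨h, by omega⟩)))
          · exact Or.inr (Finset.mem_union.mpr (Or.inr
              (Finset.mem_filter.mpr ⟨h, by omega⟩)))
  have hdisj : Disjoint (sameSide l) T := by
    rw [Finset.disjoint_left]
    intro j hj hjT
    have h1 := (Finset.mem_filter.mp hjT).2
    simp only [sameSide, mem_filter, mem_range] at hj
    omega
  have hsumD : wsum ω D = wsum ω (sameSide l) + wsum ω T := by
    rw [hDdef, wsum, Finset.sum_union hdisj]; rfl
  have hsumC : wsum ω C = wsum ω E + wsum ω T := by
    rw [hEdef, hTdef, wsum, wsum, wsum,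
      Finset.sum_filter_add_sum_filter_not]
  have hle := hmin D hcovD
  linarith
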